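/- Let O be the ring ℤ ⊕ ℤi ⊕ ℤj ⊕ ℤij inside the rational quaternion algebra (−1,−2/ℚ) (so i² = −1, j² = −2, ij = −ji, and O consists of elements with all four coordinates in ℤ), equipped with the orthogonal involution ‡ given by (x + yi + zj + tij)‡ = x + yi + zj − tij. Then O is semi-‡-Euclidean with the norm as stathm: for all a, b ∈ O with b ≠ 0, if a·b‡ is fixed by ‡ (i.e., the ij-component of a·b‡ is zero) and there exist x, y ∈ O with a·x + b·y = 1, then there exists q ∈ O with q‡ = q (i.e., the ij-component of q is zero) such that nrm(a − b·q) < nrm(b), where nrm(x + yi + zj + tij) = x² + y² + 2z² + 2t² is the reduced norm. -/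

import Mathlib

/-- The orthogonal involution `‡` on the order `ℤ ⊕ ℤi ⊕ ℤj ⊕ ℤij` of the quaternion
algebra `(−1,−2/ℚ)`, negating the `ij`-component. -/
def ddag (a : QuaternionAlgebra ℤ (-1) 0 (-2)) : QuaternionAlgebra ℤ (-1) 0 (-2) :=
  ⟨a.re, a.imI, a.imJ, -a.imK⟩

/-- The reduced norm on the order `ℤ ⊕ ℤi ⊕ ℤj ⊕ ℤij` of `(−1,−2/ℚ)`. -/
def nrm (a : QuaternionAlgebra ℤ (-1) 0 (-2)) : ℤ :=
  a.re ^ 2 + a.imI ^ 2 + 2 * a.imJ ^ 2 + 2 * a.imK ^ 2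

private lemma ediv_bounds (N B : ℤ) (hN : 0 < N) :
    ∃ q : ℤ, -N ≤ 2*(B - N*q) ∧ 2*(B - N*q) < N := by
  refine ⟨(2*B + N) / (2*N), ?_, ?_⟩ <;>
  · have h2N : (0:ℤ) < 2*N := by omega
    have h1 : 0 ≤ (2*B + N) % (2*N) := Int.emod_nonneg _ (by omega)
    have h2 : (2*B + N) % (2*N) < 2*N := Int.emod_lt_of_pos _ h2N
    have h3 : 2*N*((2*B+N)/(2*N)) + (2*B+N)%(2*N) = 2*B+N := Int.mul_ediv_add_emod _ _
    linarith

private lemma sqle {s n : ℤ} (h1 : -n ≤ s) (h2 : s < n) : s^2 ≤ n^2 := by nlinarith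
private lemma sqlt {s n : ℤ} (h1 : -n < s) (h2 : s < n) : s^2 < n^2 := by nlinarith
private lemma abs_le_one {t : ℤ} (h : t*t ≤ 2) : -1 ≤ t ∧ t ≤ 1 := by
  constructor <;> nlinarith
private lemma two_or_four {n : ℤ} (h1 : 0 < n) (h2 : n ≤ 4) (h3 : ∃ c, n = 2*c) :
    n = 2 ∨ n = 4 := by obtain ⟨c, rfl⟩ := h3; omega
private lemma parity_contra (u v : ℤ) (h : 4*u = 1 + 4*v) : False := by omega

set_option maxHeartbeats 4000000 in
private lemma nrm_pos {b0 b1 b2 b3 : ℤ} (hb : b0 = 0 → b1 = 0 → b2 = 0 → ¬b3 = 0) :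
    0 < b0^2 + b1^2 + 2*b2^2 + 2*b3^2 := by
  by_contra hcon
  push_neg at hcon
  have h0 : b0 = 0 := by
    have h : b0^2 = 0 := le_antisymm (by nlinarith [sq_nonneg b1, sq_nonneg b2, sq_nonneg b3]) (sq_nonneg b0)
    exact pow_eq_zero_iff (by norm_num) |>.mp h
  have h1 : b1 = 0 := by
    have h : b1^2 = 0 := le_antisymm (by nlinarith [sq_nonneg b0, sq_nonneg b2, sq_nonneg b3]) (sq_nonneg b1)
    exact pow_eq_zero_iff (by norm_num) |>.mp h
  have h2 : b2 = 0 := by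
    have h : b2^2 = 0 := le_antisymm (by nlinarith [sq_nonneg b0, sq_nonneg b1, sq_nonneg b3]) (sq_nonneg b2)
    exact pow_eq_zero_iff (by norm_num) |>.mp h
  have h3 : b3 = 0 := by
    have h : b3^2 = 0 := le_antisymm (by nlinarith [sq_nonneg b0, sq_nonneg b1, sq_nonneg b2]) (sq_nonneg b3)
    exact pow_eq_zero_iff (by norm_num) |>.mp h
  exact hb h0 h1 h2 h3

private lemma bounds_of_two {b0 b1 b2 b3 : ℤ}
    (h : b0*b0 + b1*b1 + 2*(b2*b2) + 2*(b3*b3) = 2) :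
    (-1 ≤ b0 ∧ b0 ≤ 1) ∧ (-1 ≤ b1 ∧ b1 ≤ 1) ∧ (-1 ≤ b2 ∧ b2 ≤ 1) ∧ (-1 ≤ b3 ∧ b3 ≤ 1) := by
  refine ⟨⟨?_, ?_⟩, ⟨?_, ?_⟩, ⟨?_, ?_⟩, ⟨?_, ?_⟩⟩ <;>
    nlinarith [mul_self_nonneg b0, mul_self_nonneg b1, mul_self_nonneg b2, mul_self_nonneg b3]

/-- the order `ℤ ⊕ ℤi ⊕ ℤj ⊕ ℤij ⊂ (−1,−2/ℚ)` is semi-‡-Euclidean with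
the reduced norm as stathm. -/
theorem order_semi_ddag_euclidean
    (a b : QuaternionAlgebra ℤ (-1) 0 (-2)) (hb : b ≠ 0)
    (hfix : (a * ddag b).imK = 0)
    (hcop : ∃ x y : QuaternionAlgebra ℤ (-1) 0 (-2), a * x + b * y = 1) :
    ∃ q : QuaternionAlgebra ℤ (-1) 0 (-2), q.imK = 0 ∧ nrm (a - b * q) < nrm b := by
  obtain ⟨x, y, hxy⟩ := hcop
  obtain ⟨a0,a1,a2,a3⟩ := a
  obtain ⟨b0,b1,b2,b3⟩ := b
  obtain ⟨x0,x1,x2,x3⟩ := x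
  obtain ⟨y0,y1,y2,y3⟩ := y
  simp only [ddag, QuaternionAlgebra.mk_mul_mk] at hfix
  rw [QuaternionAlgebra.ext_iff] at hxy
  simp only [QuaternionAlgebra.mk_mul_mk, QuaternionAlgebra.mk_add_mk,
    QuaternionAlgebra.re_one, QuaternionAlgebra.imI_one, QuaternionAlgebra.imJ_one,
    QuaternionAlgebra.imK_one] at hxy
  obtain ⟨hxy0, hxy1, hxy2, hxy3⟩ := hxy
  rw [ne_eq, QuaternionAlgebra.ext_iff] at hb
  simp only [QuaternionAlgebra.re_zero, QuaternionAlgebra.imI_zero, QuaternionAlgebra.imJ_zero,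
    QuaternionAlgebra.imK_zero, not_and] at hb
  have hNpos := nrm_pos hb
  have hNne : (b0^2 + b1^2 + 2*b2^2 + 2*b3^2) ≠ 0 := ne_of_gt hNpos
  obtain ⟨q0, h0a, h0b⟩ := ediv_bounds (b0^2 + b1^2 + 2*b2^2 + 2*b3^2) (a0*b0 + a1*b1 + 2*a2*b2 + 2*a3*b3) hNpos
  obtain ⟨q1, h1a, h1b⟩ := ediv_bounds (b0^2 + b1^2 + 2*b2^2 + 2*b3^2) (a1*b0 - a0*b1 + 2*a2*b3 - 2*a3*b2) hNpos
  obtain ⟨q2, h2a, h2b⟩ := ediv_bounds (b0^2 + b1^2 + 2*b2^2 + 2*b3^2) (a2*b0 - a0*b2 - a1*b3 + a3*b1) hNpos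
  refine ⟨⟨q0, q1, q2, 0⟩, rfl, ?_⟩
  have hNb : nrm ⟨b0,b1,b2,b3⟩ = (b0^2 + b1^2 + 2*b2^2 + 2*b3^2) := rfl
  rw [hNb]
  refine lt_of_mul_lt_mul_left ?_ hNpos.le
  refine lt_of_mul_lt_mul_left (a := (4:ℤ)) ?_ (by norm_num)
  have hI1 : 4*((b0^2 + b1^2 + 2*b2^2 + 2*b3^2) * nrm ((⟨a0,a1,a2,a3⟩ : QuaternionAlgebra ℤ (-1) 0 (-2)) - ⟨b0,b1,b2,b3⟩ * ⟨q0,q1,q2,0⟩)) =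
      (2*((a0*b0 + a1*b1 + 2*a2*b2 + 2*a3*b3) - (b0^2 + b1^2 + 2*b2^2 + 2*b3^2)*q0))^2 + (2*((a1*b0 - a0*b1 + 2*a2*b3 - 2*a3*b2) - (b0^2 + b1^2 + 2*b2^2 + 2*b3^2)*q1))^2 + 2*(2*((a2*b0 - a0*b2 - a1*b3 + a3*b1) - (b0^2 + b1^2 + 2*b2^2 + 2*b3^2)*q2))^2 := by
    simp only [nrm, QuaternionAlgebra.mk_mul_mk, QuaternionAlgebra.mk_sub_mk]
    linear_combination (8*(a3*b0 - a2*b1 + a1*b2 - a0*b3))*hfix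
  rw [hI1]
  by_cases e0 : 2*((a0*b0 + a1*b1 + 2*a2*b2 + 2*a3*b3) - (b0^2 + b1^2 + 2*b2^2 + 2*b3^2)*q0) = -(b0^2 + b1^2 + 2*b2^2 + 2*b3^2)
  · by_cases e1 : 2*((a1*b0 - a0*b1 + 2*a2*b3 - 2*a3*b2) - (b0^2 + b1^2 + 2*b2^2 + 2*b3^2)*q1) = -(b0^2 + b1^2 + 2*b2^2 + 2*b3^2)
    · by_cases e2 : 2*((a2*b0 - a0*b2 - a1*b3 + a3*b1) - (b0^2 + b1^2 + 2*b2^2 + 2*b3^2)*q2) = -(b0^2 + b1^2 + 2*b2^2 + 2*b3^2)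
      · -- the impossible equality case
        exfalso
        have P0 : 2*(a0 - b0*q0 + b1*q1 + 2*b2*q2) = (-b0 + b1 + 2*b2) := mul_left_cancel₀ hNne (by linear_combination b0*e0 - b1*e1 - 2*b2*e2 - 4*b3*hfix)
        have P1 : 2*(a1 - b0*q1 - b1*q0 + 2*b3*q2) = (-b0 - b1 + 2*b3) := mul_left_cancel₀ hNne (by linear_combination b0*e1 + b1*e0 + 4*b2*hfix - 2*b3*e2)
        have P2 : 2*(a2 - b0*q2 - b2*q0 - b3*q1) = (-b0 - b2 - b3) := mul_left_cancel₀ hNne (by linear_combination b0*e2 - 2*b1*hfix + b2*e0 + b3*e1)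
        have P3 : 2*(a3 - b1*q2 + b2*q1 - b3*q0) = (-b1 + b2 - b3) := mul_left_cancel₀ hNne (by linear_combination 2*b0*hfix + b1*e2 - b2*e1 + b3*e0)
        have hbm0 : b0*(2*q0*x0 - 2*q1*x1 - 4*q2*x2 - x0 + x1 + 2*x2 + 2*y0) - b1*(2*q0*x1 + 2*q1*x0 + 4*q2*x3 - x0 - x1 - 2*x3 + 2*y1) - 2*b2*(2*q0*x2 - 2*q1*x3 + 2*q2*x0 - x0 - x2 + x3 + 2*y2) - 2*b3*(2*q0*x3 + 2*q1*x2 - 2*q2*x1 + x1 - x2 - x3 + 2*y3) = 2 := by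
          linear_combination 2*hxy0 - (x0*P0 - x1*P1 - 2*x2*P2 - 2*x3*P3)
        have hbm1 : b0*(2*q0*x1 + 2*q1*x0 + 4*q2*x3 - x0 - x1 - 2*x3 + 2*y1) + b1*(2*q0*x0 - 2*q1*x1 - 4*q2*x2 - x0 + x1 + 2*x2 + 2*y0) + 2*b2*(2*q0*x3 + 2*q1*x2 - 2*q2*x1 + x1 - x2 - x3 + 2*y3) - 2*b3*(2*q0*x2 - 2*q1*x3 + 2*q2*x0 - x0 - x2 + x3 + 2*y2) = 0 := by
          linear_combination 2*hxy1 - (x1*P0 + x0*P1 + 2*x3*P2 - 2*x2*P3)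
        have hbm2 : b0*(2*q0*x2 - 2*q1*x3 + 2*q2*x0 - x0 - x2 + x3 + 2*y2) - b1*(2*q0*x3 + 2*q1*x2 - 2*q2*x1 + x1 - x2 - x3 + 2*y3) + b2*(2*q0*x0 - 2*q1*x1 - 4*q2*x2 - x0 + x1 + 2*x2 + 2*y0) + b3*(2*q0*x1 + 2*q1*x0 + 4*q2*x3 - x0 - x1 - 2*x3 + 2*y1) = 0 := by
          linear_combination 2*hxy2 - (x2*P0 - x3*P1 + x0*P2 + x1*P3)
        have hbm3 : b0*(2*q0*x3 + 2*q1*x2 - 2*q2*x1 + x1 - x2 - x3 + 2*y3) + b1*(2*q0*x2 - 2*q1*x3 + 2*q2*x0 - x0 - x2 + x3 + 2*y2) - b2*(2*q0*x1 + 2*q1*x0 + 4*q2*x3 - x0 - x1 - 2*x3 + 2*y1) + b3*(2*q0*x0 - 2*q1*x1 - 4*q2*x2 - x0 + x1 + 2*x2 + 2*y0) = 0 := by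
          linear_combination 2*hxy3 - (x3*P0 + x2*P1 - x1*P2 + x0*P3)
        have hNm0 : (b0^2 + b1^2 + 2*b2^2 + 2*b3^2)*(2*q0*x0 - 2*q1*x1 - 4*q2*x2 - x0 + x1 + 2*x2 + 2*y0) = 2*b0 := by
          linear_combination b0*hbm0 + b1*hbm1 + 2*b2*hbm2 + 2*b3*hbm3
        have hNm1 : (b0^2 + b1^2 + 2*b2^2 + 2*b3^2)*(2*q0*x1 + 2*q1*x0 + 4*q2*x3 - x0 - x1 - 2*x3 + 2*y1) = -(2*b1) := by
          linear_combination b0*hbm1 - b1*hbm0 - 2*b2*hbm3 + 2*b3*hbm2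
        have hNm2 : (b0^2 + b1^2 + 2*b2^2 + 2*b3^2)*(2*q0*x2 - 2*q1*x3 + 2*q2*x0 - x0 - x2 + x3 + 2*y2) = -(2*b2) := by
          linear_combination b0*hbm2 + b1*hbm3 - b2*hbm0 - b3*hbm1
        have hNm3 : (b0^2 + b1^2 + 2*b2^2 + 2*b3^2)*(2*q0*x3 + 2*q1*x2 - 2*q2*x1 + x1 - x2 - x3 + 2*y3) = -(2*b3) := by
          linear_combination b0*hbm3 - b1*hbm2 + b2*hbm1 - b3*hbm0
        have hNnrm : (b0^2 + b1^2 + 2*b2^2 + 2*b3^2) * ((2*q0*x0 - 2*q1*x1 - 4*q2*x2 - x0 + x1 + 2*x2 + 2*y0)^2 + (2*q0*x1 + 2*q1*x0 + 4*q2*x3 - x0 - x1 - 2*x3 + 2*y1)^2 + 2*(2*q0*x2 - 2*q1*x3 + 2*q2*x0 - x0 - x2 + x3 + 2*y2)^2 + 2*(2*q0*x3 + 2*q1*x2 - 2*q2*x1 + x1 - x2 - x3 + 2*y3)^2) = 4 := by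
          refine mul_left_cancel₀ hNne ?_
          linear_combination ((b0^2 + b1^2 + 2*b2^2 + 2*b3^2)*(2*q0*x0 - 2*q1*x1 - 4*q2*x2 - x0 + x1 + 2*x2 + 2*y0) + 2*b0)*hNm0 + ((b0^2 + b1^2 + 2*b2^2 + 2*b3^2)*(2*q0*x1 + 2*q1*x0 + 4*q2*x3 - x0 - x1 - 2*x3 + 2*y1) - 2*b1)*hNm1 + 2*((b0^2 + b1^2 + 2*b2^2 + 2*b3^2)*(2*q0*x2 - 2*q1*x3 + 2*q2*x0 - x0 - x2 + x3 + 2*y2) - 2*b2)*hNm2 + 2*((b0^2 + b1^2 + 2*b2^2 + 2*b3^2)*(2*q0*x3 + 2*q1*x2 - 2*q2*x1 + x1 - x2 - x3 + 2*y3) - 2*b3)*hNm3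
        have heven : ∃ c : ℤ, (b0^2 + b1^2 + 2*b2^2 + 2*b3^2) = 2*c := ⟨-((a0*b0 + a1*b1 + 2*a2*b2 + 2*a3*b3) - (b0^2 + b1^2 + 2*b2^2 + 2*b3^2)*q0), by linarith only [e0]⟩
        have hdvd : (b0^2 + b1^2 + 2*b2^2 + 2*b3^2) ∣ 4 := ⟨((2*q0*x0 - 2*q1*x1 - 4*q2*x2 - x0 + x1 + 2*x2 + 2*y0)^2 + (2*q0*x1 + 2*q1*x0 + 4*q2*x3 - x0 - x1 - 2*x3 + 2*y1)^2 + 2*(2*q0*x2 - 2*q1*x3 + 2*q2*x0 - x0 - x2 + x3 + 2*y2)^2 + 2*(2*q0*x3 + 2*q1*x2 - 2*q2*x1 + x1 - x2 - x3 + 2*y3)^2), hNnrm.symm⟩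
        have hle : (b0^2 + b1^2 + 2*b2^2 + 2*b3^2) ≤ 4 := Int.le_of_dvd (by norm_num) hdvd
        rcases two_or_four hNpos hle heven with hN2 | hN4
        · -- norm 2 : parity contradiction
          have hN2' : b0*b0 + b1*b1 + 2*(b2*b2) + 2*(b3*b3) = 2 := by linear_combination hN2
          obtain ⟨⟨l0, u0⟩, ⟨l1, u1⟩, ⟨l2, u2⟩, ⟨l3, u3⟩⟩ := bounds_of_two hN2'
          clear hfix hxy0 hxy1 hxy2 hxy3 hbm0 hbm1 hbm2 hbm3 hNm0 hNm1 hNm2 hNm3 hNnrm heven hdvd hle hN2 e0 e1 e2 h0a h0b h1a h1b h2a h2b hNpos hNne hb hNb hI1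
          interval_cases b0 <;> interval_cases b1 <;> interval_cases b2 <;> interval_cases b3 <;> omega
        · -- norm 4 : coprimality contradiction mod 4
          rw [hN4] at hNm0 hNm1 hNm2 hNm3
          have hbe0 : b0 = 2*(2*q0*x0 - 2*q1*x1 - 4*q2*x2 - x0 + x1 + 2*x2 + 2*y0) := by linarith only [hNm0]
          have hbe1 : b1 = -(2*(2*q0*x1 + 2*q1*x0 + 4*q2*x3 - x0 - x1 - 2*x3 + 2*y1)) := by linarith only [hNm1]
          have hbe2 : b2 = -(2*(2*q0*x2 - 2*q1*x3 + 2*q2*x0 - x0 - x2 + x3 + 2*y2)) := by linarith only [hNm2]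
          have hbe3 : b3 = -(2*(2*q0*x3 + 2*q1*x2 - 2*q2*x1 + x1 - x2 - x3 + 2*y3)) := by linarith only [hNm3]
          have F1 : 4*(a0^2 + a1^2 + 2*a2^2 + 2*a3^2) = (b0^2 + b1^2 + 2*b2^2 + 2*b3^2)*((2*q0-1)^2 + (2*q1-1)^2 + 2*(2*q2-1)^2) := by
            linear_combination (2*a0 + (b0*(2*q0-1) - b1*(2*q1-1) - 2*b2*(2*q2-1)))*P0 + (2*a1 + (b0*(2*q1-1) + b1*(2*q0-1) - 2*b3*(2*q2-1)))*P1 + 2*(2*a2 + (b0*(2*q2-1) + b2*(2*q0-1) + b3*(2*q1-1)))*P2 + 2*(2*a3 + (b1*(2*q2-1) - b2*(2*q1-1) + b3*(2*q0-1)))*P3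
          rw [hN4] at F1
          have hA4 : (a0^2 + a1^2 + 2*a2^2 + 2*a3^2) = 4*(q0^2 - q0 + q1^2 - q1 + 2*q2^2 - 2*q2 + 1) := by linarith only [F1]
          have F2 : (a0^2 + a1^2 + 2*a2^2 + 2*a3^2) * (x0^2 + x1^2 + 2*x2^2 + 2*x3^2) = (1 - (b0*y0 - b1*y1 - 2*b2*y2 - 2*b3*y3))^2 + (b0*y1 + b1*y0 + 2*b2*y3 - 2*b3*y2)^2 + 2*(b0*y2 - b1*y3 + b2*y0 + b3*y1)^2 + 2*(b0*y3 + b1*y2 - b2*y1 + b3*y0)^2 := by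
            linear_combination ((a0*x0 - a1*x1 - 2*a2*x2 - 2*a3*x3) + 1 - (b0*y0 - b1*y1 - 2*b2*y2 - 2*b3*y3))*hxy0 + ((a0*x1 + a1*x0 + 2*a2*x3 - 2*a3*x2) - (b0*y1 + b1*y0 + 2*b2*y3 - 2*b3*y2))*hxy1 + 2*((a0*x2 - a1*x3 + a2*x0 + a3*x1) - (b0*y2 - b1*y3 + b2*y0 + b3*y1))*hxy2 + 2*((a0*x3 + a1*x2 - a2*x1 + a3*x0) - (b0*y3 + b1*y2 - b2*y1 + b3*y0))*hxy3
          have hBY0 : (b0*y0 - b1*y1 - 2*b2*y2 - 2*b3*y3) = 2*((2*q0*x0 - 2*q1*x1 - 4*q2*x2 - x0 + x1 + 2*x2 + 2*y0)*y0 + (2*q0*x1 + 2*q1*x0 + 4*q2*x3 - x0 - x1 - 2*x3 + 2*y1)*y1 + 2*(2*q0*x2 - 2*q1*x3 + 2*q2*x0 - x0 - x2 + x3 + 2*y2)*y2 + 2*(2*q0*x3 + 2*q1*x2 - 2*q2*x1 + x1 - x2 - x3 + 2*y3)*y3) := by rw [hbe0, hbe1, hbe2, hbe3]; ring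
          have hBY1 : (b0*y1 + b1*y0 + 2*b2*y3 - 2*b3*y2) = 2*((2*q0*x0 - 2*q1*x1 - 4*q2*x2 - x0 + x1 + 2*x2 + 2*y0)*y1 - (2*q0*x1 + 2*q1*x0 + 4*q2*x3 - x0 - x1 - 2*x3 + 2*y1)*y0 - 2*(2*q0*x2 - 2*q1*x3 + 2*q2*x0 - x0 - x2 + x3 + 2*y2)*y3 + 2*(2*q0*x3 + 2*q1*x2 - 2*q2*x1 + x1 - x2 - x3 + 2*y3)*y2) := by rw [hbe0, hbe1, hbe2, hbe3]; ring
          have hBY2 : (b0*y2 - b1*y3 + b2*y0 + b3*y1) = 2*((2*q0*x0 - 2*q1*x1 - 4*q2*x2 - x0 + x1 + 2*x2 + 2*y0)*y2 + (2*q0*x1 + 2*q1*x0 + 4*q2*x3 - x0 - x1 - 2*x3 + 2*y1)*y3 - (2*q0*x2 - 2*q1*x3 + 2*q2*x0 - x0 - x2 + x3 + 2*y2)*y0 - (2*q0*x3 + 2*q1*x2 - 2*q2*x1 + x1 - x2 - x3 + 2*y3)*y1) := by rw [hbe0, hbe1, hbe2, hbe3]; ring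
          have hBY3 : (b0*y3 + b1*y2 - b2*y1 + b3*y0) = 2*((2*q0*x0 - 2*q1*x1 - 4*q2*x2 - x0 + x1 + 2*x2 + 2*y0)*y3 - (2*q0*x1 + 2*q1*x0 + 4*q2*x3 - x0 - x1 - 2*x3 + 2*y1)*y2 + (2*q0*x2 - 2*q1*x3 + 2*q2*x0 - x0 - x2 + x3 + 2*y2)*y1 - (2*q0*x3 + 2*q1*x2 - 2*q2*x1 + x1 - x2 - x3 + 2*y3)*y0) := by rw [hbe0, hbe1, hbe2, hbe3]; ring
          rw [hBY0, hBY1, hBY2, hBY3, hA4] at F2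
          have hodd : 4*((q0^2 - q0 + q1^2 - q1 + 2*q2^2 - 2*q2 + 1) * (x0^2 + x1^2 + 2*x2^2 + 2*x3^2)) = 1 + 4*(((2*q0*x0 - 2*q1*x1 - 4*q2*x2 - x0 + x1 + 2*x2 + 2*y0)*y0 + (2*q0*x1 + 2*q1*x0 + 4*q2*x3 - x0 - x1 - 2*x3 + 2*y1)*y1 + 2*(2*q0*x2 - 2*q1*x3 + 2*q2*x0 - x0 - x2 + x3 + 2*y2)*y2 + 2*(2*q0*x3 + 2*q1*x2 - 2*q2*x1 + x1 - x2 - x3 + 2*y3)*y3)^2 - ((2*q0*x0 - 2*q1*x1 - 4*q2*x2 - x0 + x1 + 2*x2 + 2*y0)*y0 + (2*q0*x1 + 2*q1*x0 + 4*q2*x3 - x0 - x1 - 2*x3 + 2*y1)*y1 + 2*(2*q0*x2 - 2*q1*x3 + 2*q2*x0 - x0 - x2 + x3 + 2*y2)*y2 + 2*(2*q0*x3 + 2*q1*x2 - 2*q2*x1 + x1 - x2 - x3 + 2*y3)*y3) + ((2*q0*x0 - 2*q1*x1 - 4*q2*x2 - x0 + x1 + 2*x2 + 2*y0)*y1 -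 (2*q0*x1 + 2*q1*x0 + 4*q2*x3 - x0 - x1 - 2*x3 + 2*y1)*y0 - 2*(2*q0*x2 - 2*q1*x3 + 2*q2*x0 - x0 - x2 + x3 + 2*y2)*y3 + 2*(2*q0*x3 + 2*q1*x2 - 2*q2*x1 + x1 - x2 - x3 + 2*y3)*y2)^2 + 2*((2*q0*x0 - 2*q1*x1 - 4*q2*x2 - x0 + x1 + 2*x2 + 2*y0)*y2 + (2*q0*x1 + 2*q1*x0 + 4*q2*x3 - x0 - x1 - 2*x3 + 2*y1)*y3 - (2*q0*x2 - 2*q1*x3 + 2*q2*x0 - x0 - x2 + x3 + 2*y2)*y0 - (2*q0*x3 + 2*q1*x2 - 2*q2*x1 + x1 - x2 - x3 + 2*y3)*y1)^2 + 2*((2*q0*x0 - 2*q1*x1 - 4*q2*x2 - x0 + x1 + 2*x2 + 2*y0)*y3 - (2*q0*x1 + 2*q1*x0 + 4*q2*x3 - x0 - x1 - 2*x3 + 2*y1)*y2 + (2*q0*x2 - 2*q1*x3 + 2*q2*x0 - x0 - x2 + x3 + 2*y2)*y1 - (2*q0*x3 + 2*q1*x2 - 2*q2*x1 + x1 - x2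 - x3 + 2*y3)*y0)^2) := by
            linear_combination F2
          exact parity_contra _ _ hodd
      · have t0 : (2*((a0*b0 + a1*b1 + 2*a2*b2 + 2*a3*b3) - (b0^2 + b1^2 + 2*b2^2 + 2*b3^2)*q0))^2 ≤ ((b0^2 + b1^2 + 2*b2^2 + 2*b3^2))^2 := sqle h0a h0b
        have t1 : (2*((a1*b0 - a0*b1 + 2*a2*b3 - 2*a3*b2) - (b0^2 + b1^2 + 2*b2^2 + 2*b3^2)*q1))^2 ≤ ((b0^2 + b1^2 + 2*b2^2 + 2*b3^2))^2 := sqle h1a h1b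
        have t2 : (2*((a2*b0 - a0*b2 - a1*b3 + a3*b1) - (b0^2 + b1^2 + 2*b2^2 + 2*b3^2)*q2))^2 < ((b0^2 + b1^2 + 2*b2^2 + 2*b3^2))^2 := sqlt (h2a.lt_of_ne (Ne.symm e2)) h2b
        linarith only [t0, t1, t2]
    · have t0 : (2*((a0*b0 + a1*b1 + 2*a2*b2 + 2*a3*b3) - (b0^2 + b1^2 + 2*b2^2 + 2*b3^2)*q0))^2 ≤ ((b0^2 + b1^2 + 2*b2^2 + 2*b3^2))^2 := sqle h0a h0b
      have t1 : (2*((a1*b0 - a0*b1 + 2*a2*b3 - 2*a3*b2) - (b0^2 + b1^2 + 2*b2^2 + 2*b3^2)*q1))^2 < ((b0^2 + b1^2 + 2*b2^2 + 2*b3^2))^2 := sqlt (h1a.lt_of_ne (Ne.symm e1)) h1b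
      have t2 : (2*((a2*b0 - a0*b2 - a1*b3 + a3*b1) - (b0^2 + b1^2 + 2*b2^2 + 2*b3^2)*q2))^2 ≤ ((b0^2 + b1^2 + 2*b2^2 + 2*b3^2))^2 := sqle h2a h2b
      linarith only [t0, t1, t2]
  · have t0 : (2*((a0*b0 + a1*b1 + 2*a2*b2 + 2*a3*b3) - (b0^2 + b1^2 + 2*b2^2 + 2*b3^2)*q0))^2 < ((b0^2 + b1^2 + 2*b2^2 + 2*b3^2))^2 := sqlt (h0a.lt_of_ne (Ne.symm e0)) h0b
    have t1 : (2*((a1*b0 - a0*b1 + 2*a2*b3 - 2*a3*b2) - (b0^2 + b1^2 + 2*b2^2 + 2*b3^2)*q1))^2 ≤ ((b0^2 + b1^2 + 2*b2^2 + 2*b3^2))^2 := sqle h1a h1b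
    have t2 : (2*((a2*b0 - a0*b2 - a1*b3 + a3*b1) - (b0^2 + b1^2 + 2*b2^2 + 2*b3^2)*q2))^2 ≤ ((b0^2 + b1^2 + 2*b2^2 + 2*b3^2))^2 := sqle h2a h2b
    linarith only [t0, t1, t2]
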